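/- The partial derivative of the normalized Bachelier call price with respect to the volatility (the Vega) is ∂c_b(y,σ)/∂σ = φ(-y/σ), which is strictly positive for all y ∈ ℝ and σ > 0. -/

import Mathlib

open MeasureTheory ProbabilityTheory Real

noncomputable def normalPdf (x : ℝ) : ℝ := (Real.sqrt (2 * Real.pi))⁻¹ * Real.exp (-(x ^ 2) / 2)

noncomputable def normalCdf (x : ℝ) : ℝ := ∫ t in Set.Iic x, normalPdf t

noncomputable def cb (y σ : ℝ) : ℝ := -y * normalCdf (-y / σ) + σ * normalPdf (-y / σ)

lemma normalPdf_pos (x : ℝ) : 0 < normalPdf x := by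
  unfold normalPdf
  positivity

lemma continuous_normalPdf : Continuous normalPdf := by
  unfold normalPdf
  continuity

lemma integrable_normalPdf : Integrable normalPdf := by
  have h : Integrable (fun x : ℝ => Real.exp (-(1/2 : ℝ) * x ^ 2)) :=
    integrable_exp_neg_mul_sq (by norm_num)
  have := h.const_mul (Real.sqrt (2 * Real.pi))⁻¹
  refine this.congr ?_
  filter_upwards with x
  unfold normalPdf
  ring_nf

lemma hasDerivAt_normalPdf (x : ℝ) : HasDerivAt normalPdf (-x * normalPdf x) x := by
  have h1 : HasDerivAt (fun t : ℝ => -(t ^ 2) / 2) (-x) x := by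
    have : HasDerivAt (fun t : ℝ => t ^ 2) (2 * x) x := by
      simpa using (hasDerivAt_pow 2 x)
    have h2 := (this.neg).div_const 2
    exact h2.congr_deriv (by ring)
  have h2 := (h1.exp).const_mul (Real.sqrt (2 * Real.pi))⁻¹
  unfold normalPdf
  exact h2.congr_deriv (by ring)

lemma hasDerivAt_normalCdf (x : ℝ) : HasDerivAt normalCdf (normalPdf x) x := by
  have hint : ∀ a b : ℝ, IntervalIntegrable normalPdf volume a b :=
    fun a b => integrable_normalPdf.intervalIntegrable
  have key : ∀ z : ℝ, normalCdf z = normalCdf 0 + ∫ t in (0:ℝ)..z, normalPdf t := by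
    intro z
    have := intervalIntegral.integral_Iic_sub_Iic integrable_normalPdf.integrableOn
      integrable_normalPdf.integrableOn (a := 0) (b := z)
    unfold normalCdf
    linarith [this]
  have hd : HasDerivAt (fun z => ∫ t in (0:ℝ)..z, normalPdf t) (normalPdf x) x :=
    intervalIntegral.integral_hasDerivAt_right (hint 0 x)
      (continuous_normalPdf.stronglyMeasurableAtFilter _ _)
      continuous_normalPdf.continuousAt
  have := (hd.const_add (normalCdf 0))
  refine HasDerivAt.congr_of_eventuallyEq this ?_
  filter_upwards with z using (key z)

theorem cb_vega (y σ : ℝ) (hσ : 0 < σ) :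
    HasDerivAt (fun s => cb y s) (normalPdf (-y / σ)) σ ∧ 0 < normalPdf (-y / σ) := by
  refine ⟨?_, normalPdf_pos _⟩
  have hσ' : σ ≠ 0 := ne_of_gt hσ
  have hu : HasDerivAt (fun s : ℝ => -y / s) (y / σ ^ 2) σ := by
    have h := (hasDerivAt_inv hσ').const_mul (-y)
    have heq : (fun s : ℝ => -y / s) = fun s => -y * s⁻¹ := by
      funext s; rw [div_eq_mul_inv]
    rw [heq]
    exact h.congr_deriv (by ring)
  have h1 : HasDerivAt (fun s : ℝ => normalCdf (-y / s))
      (normalPdf (-y / σ) * (y / σ ^ 2)) σ :=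
    (hasDerivAt_normalCdf (-y / σ)).comp σ hu
  have h2 : HasDerivAt (fun s : ℝ => normalPdf (-y / s))
      ((-(-y / σ) * normalPdf (-y / σ)) * (y / σ ^ 2)) σ :=
    (hasDerivAt_normalPdf (-y / σ)).comp σ hu
  have h3 : HasDerivAt (fun s : ℝ => s * normalPdf (-y / s))
      (1 * normalPdf (-y / σ) + σ * ((-(-y / σ) * normalPdf (-y / σ)) * (y / σ ^ 2))) σ :=
    (hasDerivAt_id σ).mul h2
  have h := ((h1.const_mul (-y)).add h3)
  have heq : (fun s => cb y s) =
      fun s => -y * normalCdf (-y / s) + s * normalPdf (-y / s) := by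
    funext s; rfl
  rw [heq]
  exact h.congr_deriv (by field_simp; ring)
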